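/- Let C_3 = ⟨s⟩ act on the polynomial ring W[x₁, x₂, x₃] over W = W(F_9) by cyclically permuting the variables: s(x₁) = x₂, s(x₂) = x₃, s(x₃) = x₁. Then the invariant ring W[x₁,x₂,x₃]^{C_3} is generated as a W-algebra by the elementary symmetric polynomials σ₁, σ₂, σ₃ together with ε = x₁²x₂ + x₂²x₃ + x₃²x₁ - x₂²x₁ - x₁²x₃ - x₃²x₂, and is isomorphic to W[σ₁, σ₂, σ₃, ε]/(ε² - f) where f = -27σ₃² - 4σ₂³ - 4σ₃σ₁³ + 18σ₁σ₂σ₃ + σ₁²σ₂². -/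

import Mathlib

open MvPolynomial

noncomputable section

instance : Fact (Nat.Prime 3) := ⟨by norm_num⟩

/-- `W = W(F₉)`, the Witt vectors of the field with nine elements. -/
abbrev W : Type := WittVector 3 (GaloisField 3 2)

/-- The cyclic permutation `x₁ ↦ x₂ ↦ x₃ ↦ x₁` of the variables. -/
def cyc : Fin 3 → Fin 3 := ⇑(finRotate 3)

/-- The invariants of `W[x₁,x₂,x₃]` under the `C₃`-action cyclically permuting the
variables, as a subalgebra. -/
def invariants : Subalgebra W (MvPolynomial (Fin 3) W) where
  carrier := {P | rename cyc P = P}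
  mul_mem' := fun ha hb => by
    simp only [Set.mem_setOf_eq, map_mul] at *; rw [ha, hb]
  add_mem' := fun ha hb => by
    simp only [Set.mem_setOf_eq, map_add] at *; rw [ha, hb]
  algebraMap_mem' := fun r => (rename cyc).commutes r

def σ₁ : MvPolynomial (Fin 3) W := X 0 + X 1 + X 2
def σ₂ : MvPolynomial (Fin 3) W := X 0 * X 1 + X 1 * X 2 + X 2 * X 0
def σ₃ : MvPolynomial (Fin 3) W := X 0 * X 1 * X 2

/-- The antisymmetrization of `x₁²x₂`. -/
def ε : MvPolynomial (Fin 3) W :=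
  X 0 ^ 2 * X 1 + X 1 ^ 2 * X 2 + X 2 ^ 2 * X 0
    - X 1 ^ 2 * X 0 - X 0 ^ 2 * X 2 - X 2 ^ 2 * X 1

/-- The relation `ε² = f(σ₁, σ₂, σ₃)` defining `S(F)^{C₃}`, in the polynomial ring on
variables `Y₀ = σ₁, Y₁ = σ₂, Y₂ = σ₃, Y₃ = ε`. -/
def rel : MvPolynomial (Fin 4) W :=
  X 3 ^ 2 - (-27 * X 2 ^ 2 - 4 * X 1 ^ 3 - 4 * X 2 * X 0 ^ 3
    + 18 * X 0 * X 1 * X 2 + X 0 ^ 2 * X 1 ^ 2)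

---------------------------------------------------------------------------
-- auxiliary development

/-- `T` is the ambient polynomial ring. -/
local notation "T" => MvPolynomial (Fin 3) W

/-- The transposition of the first two variables, as a function. -/
def tsw : Fin 3 → Fin 3 := ⇑(Equiv.swap (0 : Fin 3) 1)

lemma cyc0 : cyc 0 = 1 := rfl
lemma cyc1 : cyc 1 = 2 := rfl
lemma cyc2 : cyc 2 = 0 := rfl
lemma tsw0 : tsw 0 = 1 := rfl
lemma tsw1 : tsw 1 = 0 := rfl
lemma tsw2 : tsw 2 = 2 := rfl

lemma two_unit : IsUnit (2 : W) := by
  apply WittVector.isUnit_of_coeff_zero_ne_zero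
  have h : ((2:W)).coeff 0 = (WittVector.constantCoeff (2 : W)) := rfl
  rw [h, map_ofNat]
  intro h0
  have := (CharP.cast_eq_zero_iff (GaloisField 3 2) 3 2).mp (by exact_mod_cast h0)
  omega

-- invariance computations
lemma cyc_σ₁ : rename cyc σ₁ = σ₁ := by simp [σ₁, cyc0, cyc1, cyc2]; ring
lemma cyc_σ₂ : rename cyc σ₂ = σ₂ := by simp [σ₂, cyc0, cyc1, cyc2]; ring
lemma cyc_σ₃ : rename cyc σ₃ = σ₃ := by simp [σ₃, cyc0, cyc1, cyc2]; ring
lemma cyc_ε : rename cyc ε = ε := by simp [ε, cyc0, cyc1, cyc2]; ring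
lemma tsw_σ₁ : rename tsw σ₁ = σ₁ := by simp [σ₁, tsw0, tsw1, tsw2]; ring
lemma tsw_σ₂ : rename tsw σ₂ = σ₂ := by simp [σ₂, tsw0, tsw1, tsw2]; ring
lemma tsw_σ₃ : rename tsw σ₃ = σ₃ := by simp [σ₃, tsw0, tsw1, tsw2]; ring
lemma tsw_ε : rename tsw ε = -ε := by simp [ε, tsw0, tsw1, tsw2]; ring

lemma esymm1 : esymm (Fin 3) W 1 = σ₁ := by
  rw [esymm, show (Finset.univ : Finset (Fin 3)).powersetCard 1 = {{0}, {1}, {2}} by decide]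
  rw [Finset.sum_insert (by decide), Finset.sum_insert (by decide), Finset.sum_singleton,
      Finset.prod_singleton, Finset.prod_singleton, Finset.prod_singleton, σ₁]
  ring

lemma esymm2 : esymm (Fin 3) W 2 = σ₂ := by
  rw [esymm, show (Finset.univ : Finset (Fin 3)).powersetCard 2 = {{0,1}, {1,2}, {0,2}} by decide]
  rw [Finset.sum_insert (by decide), Finset.sum_insert (by decide), Finset.sum_singleton,
      Finset.prod_insert (by decide), Finset.prod_singleton,
      Finset.prod_insert (by decide), Finset.prod_singleton,
      Finset.prod_insert (by decide), Finset.prod_singleton, σ₂]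
  ring

lemma esymm3 : esymm (Fin 3) W 3 = σ₃ := by
  rw [esymm, show (Finset.univ : Finset (Fin 3)).powersetCard 3 = {{0,1,2}} by decide]
  rw [Finset.sum_singleton, Finset.prod_insert (by decide), Finset.prod_insert (by decide),
      Finset.prod_singleton, σ₃]
  ring

lemma vandermonde : ε = (X 0 - X 1) * ((X 1 : T) - X 2) * (X 0 - X 2) := by
  simp only [ε]; ring

lemma key_identity : ε ^ 2 =
    -27 * σ₃ ^ 2 - 4 * σ₂ ^ 3 - 4 * σ₃ * σ₁ ^ 3 + 18 * σ₁ * σ₂ * σ₃ + σ₁ ^ 2 * σ₂ ^ 2 := by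
  simp only [ε, σ₁, σ₂, σ₃]; ring

-- symmetry from the two generators
lemma perm_enum (e : Equiv.Perm (Fin 3)) :
    ⇑e = id ∨ ⇑e = cyc ∨ ⇑e = cyc ∘ cyc ∨ ⇑e = tsw ∨ ⇑e = tsw ∘ cyc ∨ ⇑e = tsw ∘ (cyc ∘ cyc) := by
  revert e; decide

lemma isSymmetric_of {Q : T} (hc : rename cyc Q = Q) (ht : rename tsw Q = Q) :
    Q.IsSymmetric := by
  intro e
  rcases perm_enum e with h | h | h | h | h | h <;>
    simp only [h, ← rename_rename, hc, ht, rename_id, AlgHom.id_apply]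

lemma X_sub_X_ne {n : ℕ} {i j : Fin n} (h : i ≠ j) :
    (X i : MvPolynomial (Fin n) W) - X j ≠ 0 := by
  rw [sub_ne_zero]
  exact fun hx => h (X_injective hx)

-- the substitution x₀ ↦ x₁, landing in two variables
def μsub : MvPolynomial (Fin 3) W →ₐ[W] MvPolynomial (Fin 2) W := aeval ![X 0, X 0, X 1]

lemma μsub_comp : (Polynomial.evalRingHom (X 0 : MvPolynomial (Fin 2) W)).comp
    (finSuccEquiv W 2).toRingEquiv.toRingHom = (μsub : T →+* _) := by
  apply MvPolynomial.ringHom_ext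
  · intro w
    simp [μsub, finSuccEquiv_eq]
  · intro i
    refine Fin.cases ?_ (fun k => ?_) i
    · simp only [RingHom.comp_apply]
      rw [show (finSuccEquiv W 2).toRingEquiv.toRingHom (X 0) = Polynomial.X from
        finSuccEquiv_X_zero]
      simp [μsub]
    · simp only [RingHom.comp_apply]
      rw [show (finSuccEquiv W 2).toRingEquiv.toRingHom (X k.succ) = Polynomial.C (X k) from
        finSuccEquiv_X_succ]
      simp only [Polynomial.coe_evalRingHom, Polynomial.eval_C, AlgHom.coe_toRingHom, μsub,
        aeval_X, Matrix.cons_val_succ]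
      fin_cases k <;> simp

lemma μsub_apply (B : T) : μsub B = Polynomial.eval (X 0) (finSuccEquiv W 2 B) := by
  have := DFunLike.congr_fun μsub_comp B
  exact this.symm

lemma finSuccEquiv_X0_sub_X1 :
    finSuccEquiv W 2 ((X 0 : T) - X 1) = Polynomial.X - Polynomial.C (X 0) := by
  rw [map_sub, finSuccEquiv_X_zero, show (1 : Fin 3) = Fin.succ 0 from rfl, finSuccEquiv_X_succ]

lemma dvd01 {B : T} (h : μsub B = 0) : ((X 0 : T) - X 1) ∣ B := by
  have hroot : finSuccEquiv W 2 ((X 0 : T) - X 1) ∣ finSuccEquiv W 2 B := by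
    rw [finSuccEquiv_X0_sub_X1, Polynomial.dvd_iff_isRoot, Polynomial.IsRoot.def]
    rw [μsub_apply] at h
    exact h
  have := map_dvd (finSuccEquiv W 2).symm hroot
  simpa using this

lemma prime01 : Prime ((X 0 : T) - X 1) := by
  rw [← MulEquiv.prime_iff (finSuccEquiv W 2).toRingEquiv.toMulEquiv]
  have : (finSuccEquiv W 2).toRingEquiv.toMulEquiv ((X 0 : T) - X 1)
      = Polynomial.X - Polynomial.C (X 0) := finSuccEquiv_X0_sub_X1
  rw [this]
  exact Polynomial.prime_X_sub_C _

lemma prime02 : Prime ((X 0 : T) - X 2) := by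
  have := (MulEquiv.prime_iff (renameEquiv W (Equiv.swap (1 : Fin 3) 2)).toRingEquiv.toMulEquiv).mpr prime01
  simpa [Equiv.swap_apply_of_ne_of_ne] using this

lemma prime12 : Prime ((X 1 : T) - X 2) := by
  have := (MulEquiv.prime_iff (renameEquiv W (finRotate 3)).toRingEquiv.toMulEquiv).mpr prime01
  simpa [show (finRotate 3) 0 = 1 from rfl, show (finRotate 3) 1 = 2 by decide] using this

lemma not_dvd_aux {p q : T} (φ : T →ₐ[W] T) (hp : φ p = 0) (hq : φ q ≠ 0) : ¬ p ∣ q := by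
  rintro ⟨c, rfl⟩
  exact hq (by rw [map_mul, hp, zero_mul])

lemma sw12_eq : ⇑(Equiv.swap (1 : Fin 3) 2) = cyc ∘ (tsw ∘ (cyc ∘ cyc)) := by decide

lemma hε_ne : (ε : T) ≠ 0 := by
  rw [vandermonde]
  exact mul_ne_zero (mul_ne_zero (X_sub_X_ne (by decide)) (X_sub_X_ne (by decide)))
    (X_sub_X_ne (by decide))

lemma alt_decomp {B : T} (hc : rename cyc B = B) (ht : rename tsw B = -B) :
    ∃ q, B = ε * q ∧ rename cyc q = q ∧ rename tsw q = q := by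
  have hgt : (![X 0, X 0, X 1] : Fin 3 → MvPolynomial (Fin 2) W) ∘ tsw = ![X 0, X 0, X 1] := by
    funext i; fin_cases i <;> rfl
  have h1 : μsub B = - μsub B := by
    have h' : μsub (rename tsw B) = μsub B := by
      rw [μsub, aeval_rename, hgt]
    rw [ht, map_neg] at h'
    exact h'.symm
  have h2 : (2 : MvPolynomial (Fin 2) W) * μsub B = 0 := by
    rw [two_mul]; nth_rewrite 1 [h1]; exact neg_add_cancel _
  have hμ : μsub B = 0 := by
    have hu : IsUnit (2 : MvPolynomial (Fin 2) W) := by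
      have := two_unit.map (algebraMap W (MvPolynomial (Fin 2) W))
      rwa [map_ofNat] at this
    exact (hu.mul_right_eq_zero).mp h2
  have d1 := dvd01 hμ
  have d3 : ((X 1 : T) - X 2) ∣ B := by
    have h := map_dvd (rename cyc) d1
    rwa [map_sub, rename_X, rename_X, cyc0, cyc1, hc] at h
  have d2 : ((X 0 : T) - X 2) ∣ B := by
    have hsw : rename (⇑(Equiv.swap (1 : Fin 3) 2)) B = -B := by
      rw [sw12_eq, ← rename_rename, ← rename_rename, ← rename_rename, hc, hc, ht, map_neg, hc]
    have h := map_dvd (rename (⇑(Equiv.swap (1 : Fin 3) 2))) d1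
    rw [map_sub, rename_X, rename_X, hsw,
      show (Equiv.swap (1 : Fin 3) 2) 0 = 0 by decide,
      show (Equiv.swap (1 : Fin 3) 2) 1 = 2 by decide] at h
    exact (dvd_neg).mp h
  obtain ⟨b1, hb1⟩ := d1
  have hnd21 : ¬ ((X 0 : T) - X 2) ∣ ((X 0 : T) - X 1) := by
    apply not_dvd_aux (aeval ![X 2, X 1, X 2])
    · simp
    · simp only [map_sub, aeval_X, Matrix.cons_val_zero, Matrix.cons_val_one, Matrix.head_cons]
      exact X_sub_X_ne (by decide)
  have h21 : ((X 0 : T) - X 2) ∣ b1 := by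
    have hd : ((X 0 : T) - X 2) ∣ ((X 0 : T) - X 1) * b1 := hb1 ▸ d2
    exact (prime02.dvd_mul.mp hd).resolve_left hnd21
  obtain ⟨b2, hb2⟩ := h21
  have hnd31 : ¬ ((X 1 : T) - X 2) ∣ ((X 0 : T) - X 1) := by
    apply not_dvd_aux (aeval ![X 0, X 2, X 2])
    · simp
    · simp only [map_sub, aeval_X, Matrix.cons_val_zero, Matrix.cons_val_one, Matrix.head_cons]
      exact X_sub_X_ne (by decide)
  have hnd32 : ¬ ((X 1 : T) - X 2) ∣ ((X 0 : T) - X 2) := by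
    apply not_dvd_aux (aeval ![X 0, X 2, X 2])
    · simp
    · simp only [map_sub, aeval_X, Matrix.cons_val_zero, Matrix.cons_val_one, Matrix.head_cons]
      exact X_sub_X_ne (by decide)
  have h3 : ((X 1 : T) - X 2) ∣ b2 := by
    have hd : ((X 1 : T) - X 2) ∣ ((X 0 : T) - X 1) * (((X 0 : T) - X 2) * b2) := by
      rw [← hb2, ← hb1]; exact d3
    rcases prime12.dvd_mul.mp hd with h | h
    · exact absurd h hnd31
    rcases prime12.dvd_mul.mp h with h' | h'
    · exact absurd h' hnd32
    · exact h'
  obtain ⟨q, hq⟩ := h3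
  have hB : B = ε * q := by rw [hb1, hb2, hq, vandermonde]; ring
  refine ⟨q, hB, ?_, ?_⟩
  · have h := hc
    rw [hB, map_mul, cyc_ε] at h
    exact mul_left_cancel₀ hε_ne h
  · have h := ht
    rw [hB, map_mul, tsw_ε] at h
    have h2' : (-ε) * rename tsw q = (-ε) * q := by linear_combination h
    exact mul_left_cancel₀ (neg_ne_zero.mpr hε_ne) h2'

lemma symm_mem_adjoin {Q : T} (h : Q.IsSymmetric) :
    Q ∈ Algebra.adjoin W ({σ₁, σ₂, σ₃} : Set T) := by
  obtain ⟨q, hq⟩ := esymmAlgHom_surjective (σ := Fin 3) W (n := 3) (by simp)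
    ⟨Q, (mem_symmetricSubalgebra Q).mpr h⟩
  have hQ := congrArg Subtype.val hq
  rw [esymmAlgHom_apply] at hQ
  rw [show Q = aeval (fun i : Fin 3 => esymm (Fin 3) W ((i : ℕ) + 1)) q from hQ.symm]
  have hsub : Set.range (fun i : Fin 3 => esymm (Fin 3) W ((i : ℕ) + 1))
      ⊆ ({σ₁, σ₂, σ₃} : Set T) := by
    rintro x ⟨i, rfl⟩
    fin_cases i
    · simp only []; rw [show ((⟨0, by omega⟩ : Fin 3) : ℕ) + 1 = 1 from rfl, esymm1]; simp
    · simp only []; rw [show ((⟨1, by omega⟩ : Fin 3) : ℕ) + 1 = 2 from rfl, esymm2]; simp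
    · simp only []; rw [show ((⟨2, by omega⟩ : Fin 3) : ℕ) + 1 = 3 from rfl, esymm3]; simp
  refine Algebra.adjoin_mono hsub ?_
  rw [Algebra.adjoin_range_eq_range_aeval]
  exact ⟨q, rfl⟩

lemma subset_gens : ({σ₁, σ₂, σ₃} : Set T) ⊆ ({σ₁, σ₂, σ₃, ε} : Set T) := by
  intro x hx
  rcases hx with h | h | h
  · exact Or.inl h
  · exact Or.inr (Or.inl h)
  · exact Or.inr (Or.inr (Or.inl h))

lemma adjoin_eq : Algebra.adjoin W ({σ₁, σ₂, σ₃, ε} : Set T) = invariants := by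
  apply le_antisymm
  · rw [Algebra.adjoin_le_iff]
    rintro x (rfl | rfl | rfl | rfl)
    · exact cyc_σ₁
    · exact cyc_σ₂
    · exact cyc_σ₃
    · exact cyc_ε
  · intro P hP
    have hP' : rename cyc P = P := hP
    obtain ⟨u, hu2⟩ := two_unit
    set r : W := ((u⁻¹ : Wˣ) : W) with hr
    have hr2 : r * 2 = 1 := by
      rw [← hu2, hr]; exact u.inv_mul
    have hctP : rename cyc (rename tsw P) = rename tsw P := by
      rw [rename_rename, show cyc ∘ tsw = tsw ∘ (cyc ∘ cyc) by decide,
        ← rename_rename, ← rename_rename, hP', hP']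
    set A : T := C r * (P + rename tsw P) with hA
    set B : T := C r * (P - rename tsw P) with hB
    have hPAB : P = A + B := by
      have h1 : A + B = (C r * C 2) * P := by rw [hA, hB, map_ofNat]; ring
      rw [h1, ← map_mul, hr2, map_one, one_mul]
    have httP : rename tsw (rename tsw P) = P := by
      rw [rename_rename, show tsw ∘ tsw = id by decide, rename_id, AlgHom.id_apply]
    have hAc : rename cyc A = A := by
      rw [hA, map_mul, map_add, rename_C, hP', hctP]
    have hAt : rename tsw A = A := by
      rw [hA, map_mul, map_add, rename_C, httP]; ring
    have hBc : rename cyc B = B := by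
      rw [hB, map_mul, map_sub, rename_C, hP', hctP]
    have hBt : rename tsw B = -B := by
      rw [hB, map_mul, map_sub, rename_C, httP]; ring
    obtain ⟨q, hBq, hqc, hqt⟩ := alt_decomp hBc hBt
    have hAmem : A ∈ Algebra.adjoin W ({σ₁, σ₂, σ₃, ε} : Set T) :=
      Algebra.adjoin_mono subset_gens (symm_mem_adjoin (isSymmetric_of hAc hAt))
    have hqmem : q ∈ Algebra.adjoin W ({σ₁, σ₂, σ₃, ε} : Set T) :=
      Algebra.adjoin_mono subset_gens (symm_mem_adjoin (isSymmetric_of hqc hqt))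
    have hεmem : ε ∈ Algebra.adjoin W ({σ₁, σ₂, σ₃, ε} : Set T) :=
      Algebra.subset_adjoin (by simp)
    rw [hPAB, hBq]
    exact add_mem hAmem (mul_mem hεmem hqmem)

---------------------------------------------------------------------------
-- the presentation

def φ : MvPolynomial (Fin 4) W →ₐ[W] T := aeval ![σ₁, σ₂, σ₃, ε]

lemma φ_X0 : φ (X 0) = σ₁ := by simp [φ]
lemma φ_X1 : φ (X 1) = σ₂ := by simp [φ]
lemma φ_X2 : φ (X 2) = σ₃ := by simp [φ]
lemma φ_X3 : φ (X 3) = ε := by simp [φ]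

lemma φ_rel : φ rel = 0 := by
  have : φ rel = ε ^ 2 - (-27 * σ₃ ^ 2 - 4 * σ₂ ^ 3 - 4 * σ₃ * σ₁ ^ 3
      + 18 * σ₁ * σ₂ * σ₃ + σ₁ ^ 2 * σ₂ ^ 2) := by
    simp only [rel, map_sub, map_add, map_mul, map_pow, map_neg, map_ofNat,
      φ_X0, φ_X1, φ_X2, φ_X3]
  rw [this, key_identity]; ring

def aevalσ : T →ₐ[W] T := aeval ![σ₁, σ₂, σ₃]

lemma aevalσ_eq (u : T) :
    aevalσ u = ((esymmAlgHom (Fin 3) W 3 u : symmetricSubalgebra (Fin 3) W) : T) := by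
  rw [esymmAlgHom_apply]
  have h : (![σ₁, σ₂, σ₃] : Fin 3 → T) = fun i : Fin 3 => esymm (Fin 3) W ((i : ℕ) + 1) := by
    funext i
    fin_cases i
    · exact esymm1.symm
    · exact esymm2.symm
    · exact esymm3.symm
  rw [aevalσ, h]

lemma aevalσ_inj : Function.Injective aevalσ := by
  intro a b hab
  apply esymmAlgHom_injective (σ := Fin 3) W (n := 3) (by simp)
  exact Subtype.ext (by rw [← aevalσ_eq, ← aevalσ_eq, hab])

lemma tsw_aevalσ (u : T) : rename tsw (aevalσ u) = aevalσ u := by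
  have h : ((rename tsw : T →ₐ[W] T).comp aevalσ) = aevalσ := by
    apply MvPolynomial.algHom_ext
    intro k
    fin_cases k <;> simp [aevalσ, tsw_σ₁, tsw_σ₂, tsw_σ₃]
  exact DFunLike.congr_fun h u

/-- The isomorphism isolating the variable `X 3`. -/
def G : MvPolynomial (Fin 4) W ≃ₐ[W] Polynomial T :=
  (renameEquiv W (finRotate 4)).trans (finSuccEquiv W 3)

lemma G_X3 : G (X 3) = Polynomial.X := by
  rw [G, AlgEquiv.trans_apply, renameEquiv_apply, rename_X,
    show (finRotate 4) 3 = 0 by decide, finSuccEquiv_X_zero]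

lemma G_X0 : G (X 0) = Polynomial.C (X 0) := by
  rw [G, AlgEquiv.trans_apply, renameEquiv_apply, rename_X,
    show (finRotate 4) 0 = Fin.succ 0 by decide, finSuccEquiv_X_succ]

lemma G_X1 : G (X 1) = Polynomial.C (X 1) := by
  rw [G, AlgEquiv.trans_apply, renameEquiv_apply, rename_X,
    show (finRotate 4) 1 = Fin.succ 1 by decide, finSuccEquiv_X_succ]

lemma G_X2 : G (X 2) = Polynomial.C (X 2) := by
  rw [G, AlgEquiv.trans_apply, renameEquiv_apply, rename_X,
    show (finRotate 4) 2 = Fin.succ 2 by decide, finSuccEquiv_X_succ]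

/-- The image of `rel` under `G`. -/
def frel : T := -27 * X 2 ^ 2 - 4 * X 1 ^ 3 - 4 * X 2 * X 0 ^ 3
    + 18 * X 0 * X 1 * X 2 + X 0 ^ 2 * X 1 ^ 2

lemma G_rel : G rel = Polynomial.X ^ 2 - Polynomial.C frel := by
  rw [rel]
  simp only [map_sub, map_add, map_mul, map_pow, map_neg, map_ofNat, G_X0, G_X1, G_X2, G_X3]
  rw [frel]
  push_cast [map_sub, map_add, map_mul, map_pow, map_neg, map_ofNat]
  ring

lemma φ_G_symm_C (u : T) : φ (G.symm (Polynomial.C u)) = aevalσ u := by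
  have h : ((φ.comp (G.symm.toAlgHom)).comp (IsScalarTower.toAlgHom W T (Polynomial T)))
      = aevalσ := by
    apply MvPolynomial.algHom_ext
    intro k
    fin_cases k
    · have : G.symm (Polynomial.C (X 0)) = (X 0 : MvPolynomial (Fin 4) W) :=
        (AlgEquiv.symm_apply_eq G).mpr G_X0.symm
      simp only [Fin.zero_eta, Fin.mk_one, Fin.reduceFinMk, AlgHom.comp_apply,
        IsScalarTower.toAlgHom_apply, AlgEquiv.toAlgHom_eq_coe, AlgHom.coe_coe]
      rw [show (algebraMap T (Polynomial T)) (X 0) = Polynomial.C (X 0) from rfl]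
      erw [this]
      simp [φ, aevalσ]
    · have : G.symm (Polynomial.C (X 1)) = (X 1 : MvPolynomial (Fin 4) W) :=
        (AlgEquiv.symm_apply_eq G).mpr G_X1.symm
      simp only [Fin.zero_eta, Fin.mk_one, Fin.reduceFinMk, AlgHom.comp_apply,
        IsScalarTower.toAlgHom_apply, AlgEquiv.toAlgHom_eq_coe, AlgHom.coe_coe]
      rw [show (algebraMap T (Polynomial T)) (X 1) = Polynomial.C (X 1) from rfl]
      erw [this]
      simp [φ, aevalσ]
    · have : G.symm (Polynomial.C (X 2)) = (X 2 : MvPolynomial (Fin 4) W) :=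
        (AlgEquiv.symm_apply_eq G).mpr G_X2.symm
      simp only [Fin.zero_eta, Fin.mk_one, Fin.reduceFinMk, AlgHom.comp_apply,
        IsScalarTower.toAlgHom_apply, AlgEquiv.toAlgHom_eq_coe, AlgHom.coe_coe]
      rw [show (algebraMap T (Polynomial T)) (X 2) = Polynomial.C (X 2) from rfl]
      erw [this]
      simp [φ, aevalσ]
  exact DFunLike.congr_fun h u

lemma reduce (g : MvPolynomial (Fin 4) W) :
    ∃ h a b, g = rel * h + (G.symm (Polynomial.C a) + G.symm (Polynomial.C b) * X 3) := by
  have hmonic : (Polynomial.X ^ 2 - Polynomial.C frel).Monic :=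
    Polynomial.monic_X_pow_sub_C frel (by norm_num)
  have hdeg2 : (Polynomial.X ^ 2 - Polynomial.C frel).degree = 2 :=
    Polynomial.degree_X_pow_sub_C (by norm_num) frel
  obtain ⟨h', r, hq_eq, hrdeg⟩ :
      ∃ h' r : Polynomial T, G g = (Polynomial.X ^ 2 - Polynomial.C frel) * h' + r ∧
        r.degree < 2 := by
    refine ⟨G g /ₘ (Polynomial.X ^ 2 - Polynomial.C frel),
      G g %ₘ (Polynomial.X ^ 2 - Polynomial.C frel), ?_, ?_⟩
    · rw [add_comm]
      exact (Polynomial.modByMonic_add_div (G g) _).symm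
    · rw [← hdeg2]
      exact Polynomial.degree_modByMonic_lt _ hmonic
  have h2 : r.degree ≤ 1 := by
    rcases hr0 : r.degree with - | n
    · exact bot_le
    · rw [hr0] at hrdeg
      rw [show (Option.some n : WithBot ℕ) = (n : WithBot ℕ) from rfl] at hrdeg ⊢
      have hn : n < 2 := by exact_mod_cast hrdeg
      exact_mod_cast Nat.lt_succ_iff.mp hn
  obtain ⟨a, b, hrab⟩ : ∃ a b, r = Polynomial.C b * Polynomial.X + Polynomial.C a :=
    ⟨r.coeff 0, r.coeff 1, Polynomial.eq_X_add_C_of_degree_le_one h2⟩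
  refine ⟨G.symm h', a, b, ?_⟩
  have hgq : g = G.symm (G g) := (AlgEquiv.symm_apply_apply _ _).symm
  have hGd : G.symm (Polynomial.X ^ 2 - Polynomial.C frel) = rel := by
    rw [← G_rel, AlgEquiv.symm_apply_apply]
  have hGX : G.symm Polynomial.X = (X 3 : MvPolynomial (Fin 4) W) :=
    (AlgEquiv.symm_apply_eq G).mpr G_X3.symm
  rw [hgq, hq_eq, hrab, map_add, map_mul, map_add, map_mul, hGd, hGX]
  ring

lemma ker_sub (g : MvPolynomial (Fin 4) W) (hg : φ g = 0) : g ∈ Ideal.span {rel} := by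
  obtain ⟨h, a, b, hgab⟩ := reduce g
  have heq : aevalσ a + aevalσ b * ε = 0 := by
    have := hg
    rw [hgab, map_add, map_mul, φ_rel, zero_mul, zero_add, map_add, map_mul,
      φ_G_symm_C, φ_G_symm_C, φ_X3] at this
    exact this
  have heq2 : aevalσ a - aevalσ b * ε = 0 := by
    have h' := congrArg (rename tsw) heq
    rwa [map_add, map_mul, tsw_aevalσ, tsw_aevalσ, tsw_ε, map_zero, mul_neg,
      ← sub_eq_add_neg] at h'
  have ha : aevalσ a = 0 := by
    have h2 : (2 : T) * aevalσ a = 0 := by linear_combination heq + heq2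
    have hu : IsUnit (2 : T) := by
      have := two_unit.map (algebraMap W T)
      rwa [map_ofNat] at this
    exact (hu.mul_right_eq_zero).mp h2
  have hb : aevalσ b = 0 := by
    have hbe : aevalσ b * ε = 0 := by linear_combination heq - ha
    rcases mul_eq_zero.mp hbe with h' | h'
    · exact h'
    · exact absurd h' hε_ne
  have ha0 : a = 0 := aevalσ_inj (by rw [ha, map_zero])
  have hb0 : b = 0 := aevalσ_inj (by rw [hb, map_zero])
  rw [hgab, ha0, hb0, map_zero, map_zero, zero_mul, add_zero, add_zero]
  exact Ideal.mem_span_singleton.mpr ⟨h, rfl⟩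

lemma range_φ : φ.range = invariants := by
  have h1 : Set.range (![σ₁, σ₂, σ₃, ε] : Fin 4 → T) = {σ₁, σ₂, σ₃, ε} := by
    ext x
    constructor
    · rintro ⟨i, rfl⟩
      fin_cases i
      · exact Or.inl rfl
      · exact Or.inr (Or.inl rfl)
      · exact Or.inr (Or.inr (Or.inl rfl))
      · exact Or.inr (Or.inr (Or.inr rfl))
    · rintro (rfl | rfl | rfl | rfl)
      exacts [⟨0, rfl⟩, ⟨1, rfl⟩, ⟨2, rfl⟩, ⟨3, rfl⟩]
  rw [φ, ← Algebra.adjoin_range_eq_range_aeval, h1, adjoin_eq]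


/-- the `C₃`-invariants of `W[x₁,x₂,x₃]` are generated as a `W`-algebra
by `σ₁, σ₂, σ₃, ε`, and the invariant ring is isomorphic to
`W[σ₁,σ₂,σ₃,ε]/(ε² - f)` with `f = -27σ₃² - 4σ₂³ - 4σ₃σ₁³ + 18σ₁σ₂σ₃ + σ₁²σ₂²`. -/
theorem invariants_presentation :
    Algebra.adjoin W ({σ₁, σ₂, σ₃, ε} : Set (MvPolynomial (Fin 3) W)) = invariants ∧
      ∃ e : (MvPolynomial (Fin 4) W ⧸ Ideal.span {rel}) ≃ₐ[W] ↥invariants,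
        (e (Ideal.Quotient.mk _ (X 0)) : MvPolynomial (Fin 3) W) = σ₁ ∧
        (e (Ideal.Quotient.mk _ (X 1)) : MvPolynomial (Fin 3) W) = σ₂ ∧
        (e (Ideal.Quotient.mk _ (X 2)) : MvPolynomial (Fin 3) W) = σ₃ ∧
        (e (Ideal.Quotient.mk _ (X 3)) : MvPolynomial (Fin 3) W) = ε := by
  refine ⟨adjoin_eq, ?_⟩
  set φ' : MvPolynomial (Fin 4) W →ₐ[W] invariants :=
    φ.codRestrict invariants (fun g => by
      rw [← range_φ]; exact φ.mem_range_self g) with hφ'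
  have hsurj : Function.Surjective φ' := by
    intro y
    have hy : (y : T) ∈ φ.range := by rw [range_φ]; exact y.2
    obtain ⟨g, hg⟩ := hy
    exact ⟨g, Subtype.ext hg⟩
  have hker : RingHom.ker φ' = Ideal.span {rel} := by
    ext g
    rw [RingHom.mem_ker]
    constructor
    · intro hg
      exact ker_sub g (congrArg Subtype.val hg)
    · intro hg
      obtain ⟨c, rfl⟩ := Ideal.mem_span_singleton.mp hg
      exact Subtype.ext (by show φ (rel * c) = 0; rw [map_mul, φ_rel, zero_mul])
  refine ⟨(Ideal.quotientEquivAlgOfEq W hker.symm).trans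
    (Ideal.quotientKerAlgEquivOfSurjective hsurj), ?_, ?_, ?_, ?_⟩
  · rw [AlgEquiv.trans_apply, Ideal.quotientEquivAlgOfEq_mk,
      Ideal.quotientKerAlgEquivOfSurjective_mk]
    exact φ_X0
  · rw [AlgEquiv.trans_apply, Ideal.quotientEquivAlgOfEq_mk,
      Ideal.quotientKerAlgEquivOfSurjective_mk]
    exact φ_X1
  · rw [AlgEquiv.trans_apply, Ideal.quotientEquivAlgOfEq_mk,
      Ideal.quotientKerAlgEquivOfSurjective_mk]
    exact φ_X2
  · rw [AlgEquiv.trans_apply, Ideal.quotientEquivAlgOfEq_mk,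
      Ideal.quotientKerAlgEquivOfSurjective_mk]
    exact φ_X3


end
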